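/- Let H be a real Hilbert space, K ⊆ H closed convex nonempty, x ∈ K, g ∈ H with ⟨g, y − x⟩ ≤ 0 for all y ∈ K (i.e., g in the normal cone). Suppose K is extended polyhedric at x for g, i.e., the closure of { z ∈ T_K(x) : 0 ∈ T²_K(x,z) } ∩ g^⊥ equals T_K(x) ∩ g^⊥. Then the second subderivative Q of the indicator function δ_K at x for g satisfies Q(z) = 0 for all z in { z ∈ T_K(x) : 0 ∈ T²_K(x,z) } ∩ g^⊥, and the domain of Q contains this set. -/

import Mathlib

open Filter Topology
open scoped RealInnerProductSpace Classical

variable {H : Type*} [NormedAddCommGroup H] [InnerProductSpace ℝ H] [CompleteSpace H]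

/-- Second-order difference quotient of `j` at `x` for `g` with step `t` and direction `w`. -/
noncomputable def secondQuotH (j : H → EReal) (x g : H) (t : ℝ) (w : H) : EReal :=
  ((2 / t ^ 2 : ℝ) : EReal) * (j (x + t • w) - j x - ((t * ⟪g, w⟫ : ℝ) : EReal))

/-- Weak convergence of a sequence in the Hilbert space `H`. -/
def WeakTendstoH (z : ℕ → H) (z₀ : H) : Prop :=
  ∀ w : H, Tendsto (fun n => ⟪z n, w⟫) atTop (nhds ⟪z₀, w⟫)

/-- The weak second subderivative of `j` at `x` for `g`. -/
noncomputable def QsubH (j : H → EReal) (x g z : H) : EReal :=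
  sInf { L | ∃ (t : ℕ → ℝ) (zs : ℕ → H),
      (∀ n, 0 < t n) ∧ Tendsto t atTop (nhds 0) ∧ WeakTendstoH zs z ∧
      L = Filter.liminf (fun n => secondQuotH j x g (t n) (zs n)) atTop }

/-- The indicator function of a set, with values in `EReal`. -/
noncomputable def indicatorE (K : Set H) : H → EReal := fun y => if y ∈ K then 0 else ⊤

/-- The tangent cone `T_K(x) = cl(ℝ⁺ (K - x))`. -/
def tangentConeH (K : Set H) (x : H) : Set H :=
  closure { z : H | ∃ c : ℝ, 0 ≤ c ∧ ∃ k ∈ K, z = c • (k - x) }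

/-- The second-order tangent set `T²_K(x, z)`. -/
def secondTangentH (K : Set H) (x z : H) : Set H :=
  { r : H | Tendsto (fun t : ℝ => Metric.infDist (x + t • z + (t ^ 2 / 2) • r) K / t ^ 2)
      (nhdsWithin 0 (Set.Ioi 0)) (nhds 0) }

/-- The proximal normal cone condition: `v ∈ N^P_K(x̄)`. -/
def ProxNormal (K : Set H) (xb v : H) : Prop :=
  ∃ l : ℝ, 0 ≤ l ∧ ∃ y : H, (xb ∈ K ∧ ∀ k ∈ K, ‖xb - y‖ ≤ ‖k - y‖) ∧ v = l • (y - xb)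

/-- `K` is `r`-prox-regular. -/
def ProxRegular (r : ℝ) (K : Set H) : Prop :=
  ∀ xb ∈ K, ∀ x ∈ K, ∀ v : H, ProxNormal K xb v →
    r * ⟪v, x - xb⟫ ≤ (1 / 2) * ‖v‖ * ‖x - xb‖ ^ 2

/-- Strong second-order epi-differentiability of `j` at `x` for `g`. -/
def StrongTwiceEpiH (j : H → EReal) (x g : H) : Prop :=
  ∀ z : H, ∀ t : ℕ → ℝ, (∀ n, 0 < t n) → Tendsto t atTop (nhds 0) →
    ∃ zs : ℕ → H, Tendsto zs atTop (nhds z) ∧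
      Tendsto (fun n => secondQuotH j x g (t n) (zs n)) atTop (nhds (QsubH j x g z))

lemma secondQuot_indicator_nonneg (K : Set H) (x g : H) (hx : x ∈ K)
    (hg : ∀ y ∈ K, ⟪g, y - x⟫ ≤ 0) {t : ℝ} (ht : 0 < t) (w : H) :
    (0 : EReal) ≤ secondQuotH (indicatorE K) x g t w := by
  have hc : (0:ℝ) < 2 / t ^ 2 := by positivity
  unfold secondQuotH indicatorE
  simp only [if_pos hx]
  by_cases hmem : x + t • w ∈ K
  · simp only [if_pos hmem]
    have h1 : t * ⟪g, w⟫ ≤ 0 := by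
      have h := hg _ hmem
      rwa [add_sub_cancel_left, real_inner_smul_right] at h
    have h2 : (0:EReal) - 0 - ((t * ⟪g, w⟫ : ℝ) : EReal)
        = (((0:ℝ) - 0 - (t * ⟪g, w⟫) : ℝ) : EReal) := by
      push_cast; rfl
    have hr : (0:ℝ) ≤ 2 / t ^ 2 * ((0:ℝ) - 0 - t * ⟪g, w⟫) :=
      mul_nonneg hc.le (by linarith)
    rw [h2, ← EReal.coe_mul]
    exact_mod_cast hr
  · simp only [if_neg hmem]
    have h2 : (⊤:EReal) - 0 - ((t * ⟪g, w⟫ : ℝ) : EReal) = ⊤ := by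
      rw [sub_zero, EReal.top_sub_coe]
    rw [h2, EReal.mul_top_of_pos (by exact_mod_cast hc)]
    exact le_top

/-- for an extended polyhedric set, the second subderivative of the indicator
function vanishes on `{ z ∈ T_K(x) : 0 ∈ T²_K(x,z) } ∩ g^⊥`, which is therefore contained
in its domain. -/
theorem Qsub_indicator_extendedPolyhedric (K : Set H) (hKcl : IsClosed K)
    (hKconv : Convex ℝ K) (hKne : K.Nonempty) (x : H) (hx : x ∈ K) (g : H)
    (hg : ∀ y ∈ K, ⟪g, y - x⟫ ≤ 0)
    (hEP : tangentConeH K x ∩ { z : H | ⟪g, z⟫ = 0 } =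
      closure (({ z ∈ tangentConeH K x | (0 : H) ∈ secondTangentH K x z }) ∩
        { z : H | ⟪g, z⟫ = 0 })) :
    ∀ z ∈ ({ z ∈ tangentConeH K x | (0 : H) ∈ secondTangentH K x z }) ∩
        { z : H | ⟪g, z⟫ = 0 },
      QsubH (indicatorE K) x g z = 0 := by
  rintro z ⟨⟨hzT, hz2⟩, hzg⟩
  have hzg0 : ⟪g, z⟫ = 0 := hzg
  -- the step sequence
  set t : ℕ → ℝ := fun n => 1 / (n + 1) with ht_def
  have ht_pos : ∀ n, 0 < t n := fun n => by positivity
  have ht0 : Tendsto t atTop (𝓝 0) := tendsto_one_div_add_atTop_nhds_zero_nat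
  have htW : Tendsto t atTop (𝓝[>] 0) :=
    tendsto_nhdsWithin_of_tendsto_nhds_of_eventually_within t ht0
      (Eventually.of_forall fun n => ht_pos n)
  -- distance quotient tends to zero
  have hz2' : Tendsto (fun s : ℝ => Metric.infDist (x + s • z) K / s ^ 2) (𝓝[>] 0) (𝓝 0) := by
    have h := hz2
    simpa only [secondTangentH, Set.mem_setOf_eq, smul_zero, add_zero] using h
  set d : ℕ → ℝ := fun n => Metric.infDist (x + t n • z) K with hd_def
  have hd0 : ∀ n, 0 ≤ d n := fun n => Metric.infDist_nonneg
  have hdq : Tendsto (fun n => d n / t n ^ 2) atTop (𝓝 0) := hz2'.comp htW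
  -- choose nearby points of K
  have hex : ∀ n, ∃ k ∈ K, dist (x + t n • z) k < d n + t n ^ 3 := by
    intro n
    refine (Metric.infDist_lt_iff hKne).1 ?_
    have : 0 < t n ^ 3 := by positivity
    linarith [le_refl (d n)]
  choose k hkK hkd using hex
  set zs : ℕ → H := fun n => (t n)⁻¹ • (k n - x) with hzs_def
  have hmem : ∀ n, x + t n • zs n = k n := by
    intro n
    rw [hzs_def]
    simp only [smul_inv_smul₀ (ht_pos n).ne']
    abel
  have hkdist : ∀ n, ‖k n - (x + t n • z)‖ ≤ d n + t n ^ 3 := by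
    intro n
    rw [norm_sub_rev, ← dist_eq_norm]
    exact (hkd n).le
  have hzs_bound : ∀ n, ‖zs n - z‖ ≤ (d n + t n ^ 3) / t n := by
    intro n
    have h1 : t n • (zs n - z) = k n - (x + t n • z) := by
      rw [smul_sub, hzs_def]
      simp only [smul_inv_smul₀ (ht_pos n).ne']
      abel
    have h2 : ‖zs n - z‖ = ‖k n - (x + t n • z)‖ / t n := by
      rw [← h1, norm_smul, Real.norm_eq_abs, abs_of_pos (ht_pos n)]
      field_simp
      rw [mul_div_cancel_right₀ _ (ht_pos n).ne']
    rw [h2]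
    gcongr
    exact hkdist n
  -- strong convergence of zs
  have hbound_eq : ∀ n, (d n + t n ^ 3) / t n = (d n / t n ^ 2) * t n + t n ^ 2 := by
    intro n
    field_simp
  have hbound0 : Tendsto (fun n => (d n + t n ^ 3) / t n) atTop (𝓝 0) := by
    simp only [hbound_eq]
    have h1 : Tendsto (fun n => (d n / t n ^ 2) * t n) atTop (𝓝 (0 * 0)) := hdq.mul ht0
    have h2 : Tendsto (fun n => t n ^ 2) atTop (𝓝 (0 ^ 2)) := ht0.pow 2
    simpa using h1.add h2
  have hzs_tend : Tendsto zs atTop (𝓝 z) := by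
    rw [tendsto_iff_norm_sub_tendsto_zero]
    exact squeeze_zero_norm (fun n => by simpa using hzs_bound n) hbound0
  have hweak : WeakTendstoH zs z := fun w => (hzs_tend.inner tendsto_const_nhds)
  -- the real-valued quotient
  set q : ℕ → ℝ := fun n => 2 / t n ^ 2 * (0 - 0 - t n * ⟪g, zs n⟫) with hq_def
  have hval : ∀ n, secondQuotH (indicatorE K) x g (t n) (zs n) = ((q n : ℝ) : EReal) := by
    intro n
    unfold secondQuotH
    rw [hmem n]
    simp only [indicatorE, if_pos (hkK n), if_pos hx, hq_def]
    push_cast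
    rfl
  have hq_abs : ∀ n, |q n| ≤ 2 * ‖g‖ * (d n / t n ^ 2 + t n) := by
    intro n
    have hgz : ⟪g, zs n⟫ = ⟪g, zs n - z⟫ := by
      rw [inner_sub_right, hzg0, sub_zero]
    have h1 : |⟪g, zs n⟫| ≤ ‖g‖ * ((d n + t n ^ 3) / t n) := by
      rw [hgz]
      calc |⟪g, zs n - z⟫| ≤ ‖g‖ * ‖zs n - z‖ := abs_real_inner_le_norm _ _
        _ ≤ ‖g‖ * ((d n + t n ^ 3) / t n) := by
            gcongr; exact hzs_bound n
    have htn := ht_pos n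
    have h2 : |q n| = 2 / t n * |⟪g, zs n⟫| := by
      rw [hq_def]
      beta_reduce
      rw [show 2 / t n ^ 2 * ((0:ℝ) - 0 - t n * ⟪g, zs n⟫)
            = -(2 / t n * ⟪g, zs n⟫) by field_simp; ring]
      rw [abs_neg, abs_mul, abs_of_pos (by positivity : (0:ℝ) < 2 / t n)]
    rw [h2]
    calc 2 / t n * |⟪g, zs n⟫| ≤ 2 / t n * (‖g‖ * ((d n + t n ^ 3) / t n)) := by
          gcongr
      _ = 2 * ‖g‖ * (d n / t n ^ 2 + t n) := by
          field_simp
  have hB0 : Tendsto (fun n => 2 * ‖g‖ * (d n / t n ^ 2 + t n)) atTop (𝓝 0) := by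
    have h1 : Tendsto (fun n => d n / t n ^ 2 + t n) atTop (𝓝 (0 + 0)) := hdq.add ht0
    have := (tendsto_const_nhds (x := (2 * ‖g‖ : ℝ)) (f := atTop (α := ℕ))).mul h1
    simpa using this
  have hq0 : Tendsto q atTop (𝓝 0) := squeeze_zero_norm (fun n => hq_abs n) hB0
  have hquot_tend : Tendsto (fun n => secondQuotH (indicatorE K) x g (t n) (zs n)) atTop
      (𝓝 (0 : EReal)) := by
    simp only [hval]
    have : ((0:ℝ) : EReal) = (0 : EReal) := rfl
    rw [← this]
    exact EReal.tendsto_coe.2 hq0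
  have hlim : Filter.liminf (fun n => secondQuotH (indicatorE K) x g (t n) (zs n)) atTop
      = (0 : EReal) := hquot_tend.liminf_eq
  -- conclude
  unfold QsubH
  apply le_antisymm
  · exact sInf_le ⟨t, zs, ht_pos, ht0, hweak, hlim.symm⟩
  · refine le_sInf ?_
    rintro L ⟨t', zs', ht'_pos, -, -, rfl⟩
    exact Filter.le_liminf_of_le (by isBoundedDefault)
      (Eventually.of_forall fun n =>
        secondQuot_indicator_nonneg K x g hx hg (ht'_pos n) (zs' n))
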